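/- If G is a 4-Ore graph, then p(G) ≤ 1.8, where the inequality is over the rationals (1.8 = 9/5). -/

import Mathlib

open SimpleGraph

/-- The degree of a vertex, as the cardinality of its neighbor set. -/
noncomputable def deg {V : Type} (G : SimpleGraph V) (v : V) : ℕ :=
  Nat.card (G.neighborSet v)

/-- The number of edges of a graph. -/
noncomputable def numEdges {V : Type} (G : SimpleGraph V) : ℕ :=
  Nat.card G.edgeSet

/-- The independence number of a graph. -/
noncomputable def indepNum {V : Type} (G : SimpleGraph V) : ℕ :=
  sSup {n | ∃ s : Set V, (∀ u ∈ s, ∀ v ∈ s, ¬ G.Adj u v) ∧ s.ncard = n}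

/-- The set of vertices of degree at most three. -/
noncomputable def D3set {V : Type} (G : SimpleGraph V) : Set V :=
  {v | deg G v ≤ 3}

/-- `D3(G)`: the subgraph induced by the vertices of degree at most three. -/
noncomputable def D3 {V : Type} (G : SimpleGraph V) : SimpleGraph (D3set G) :=
  G.induce (D3set G)

/-- The potential of a graph: `p(G) = 4.8 |V(G)| - 3 |E(G)| + 0.6 α(D3(G))`. -/
noncomputable def potential {V : Type} (G : SimpleGraph V) : ℚ :=
  (24/5 : ℚ) * Nat.card V - 3 * numEdges G + (3/5 : ℚ) * _root_.indepNum (D3 G)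

/-- The potential of a subset `R` of the vertices of `G`:
`p(R) = 4.8 |R| - 3 |E(G[R])| + 0.6 α(G[D3(G) ∩ R])`. -/
noncomputable def potentialOf {V : Type} (G : SimpleGraph V) (R : Set V) : ℚ :=
  (24/5 : ℚ) * R.ncard - 3 * numEdges (G.induce R)
    + (3/5 : ℚ) * _root_.indepNum (G.induce (D3set G ∩ R))

/-- A graph is `k`-critical if it is not `(k-1)`-colorable but every proper
subgraph is `(k-1)`-colorable. -/
def IsKCritical {V : Type} (G : SimpleGraph V) (k : ℕ) : Prop :=
  ¬ G.Colorable (k - 1) ∧ ∀ H : SimpleGraph V, H ≤ G → H ≠ G → H.Colorable (k - 1)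

/-- A graph has Ore-degree at most `d` if `d(u) + d(v) ≤ d` for every edge `uv`. -/
def OreDegreeAtMost {V : Type} (G : SimpleGraph V) (d : ℕ) : Prop :=
  ∀ u v, G.Adj u v → deg G u + deg G v ≤ d

/-- The Ore-composition of `G1` (edge-side, with replaced edge `xy`) and `G2`
(split-side, with split vertex `z` whose incident edges going to `A` are attached
to `x` and the remaining ones to `y`). -/
def oreCompose {V1 V2 : Type} (G1 : SimpleGraph V1) (G2 : SimpleGraph V2)
    (x y : V1) (z : V2) (A : Set V2) :
    SimpleGraph (V1 ⊕ {v : V2 // v ≠ z}) :=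
  SimpleGraph.fromRel (fun a b =>
    match a, b with
    | Sum.inl u, Sum.inl v =>
        G1.Adj u v ∧ ¬((u = x ∧ v = y) ∨ (u = y ∧ v = x))
    | Sum.inl u, Sum.inr v =>
        (u = x ∧ G2.Adj z v.1 ∧ v.1 ∈ A) ∨ (u = y ∧ G2.Adj z v.1 ∧ v.1 ∉ A)
    | Sum.inr _, Sum.inl _ => False
    | Sum.inr u, Sum.inr v => G2.Adj u.1 v.1)

/-- `G` is an Ore-composition of `G1` and `G2`: there are a replaced edge `xy` of
`G1`, a split vertex `z` of `G2`, and a splitting of the edges at `z` into two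
nonempty parts, such that `G` is isomorphic to the resulting composition. -/
def IsOreComposition {V V1 V2 : Type} (G : SimpleGraph V)
    (G1 : SimpleGraph V1) (G2 : SimpleGraph V2) : Prop :=
  ∃ (x y : V1) (z : V2) (A : Set V2),
    G1.Adj x y ∧ (∃ p, G2.Adj z p ∧ p ∈ A) ∧ (∃ q, G2.Adj z q ∧ q ∉ A) ∧
    Nonempty (G ≃g oreCompose G1 G2 x y z A)

/-- The family of `4`-Ore graphs: the smallest family of graphs containing `K4`
and closed under Ore-compositions. -/
inductive IsFourOre : ∀ {V : Type}, SimpleGraph V → Prop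
  | k4 {V : Type} (G : SimpleGraph V) :
      Nonempty (G ≃g completeGraph (Fin 4)) → IsFourOre G
  | comp {V V1 V2 : Type} (G : SimpleGraph V)
      (G1 : SimpleGraph V1) (G2 : SimpleGraph V2) :
      IsFourOre G1 → IsFourOre G2 → IsOreComposition G G1 G2 → IsFourOre G

/-- The boundary of a set `R`: the vertices of `R` with a neighbor outside `R`. -/
def boundary {V : Type} (G : SimpleGraph V) (R : Set V) : Set V :=
  {v | v ∈ R ∧ ∃ u, u ∉ R ∧ G.Adj v u}

/-- A proper subset `R` of the vertices with `|R| ≥ 2` is collapsible if in every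
proper 3-coloring of `G[R]` all vertices of the boundary of `R` get the same color. -/
def Collapsible {V : Type} (G : SimpleGraph V) (R : Set V) : Prop :=
  R ≠ Set.univ ∧ 2 ≤ R.ncard ∧
  ∀ φ : V → Fin 3, (∀ u ∈ R, ∀ v ∈ R, G.Adj u v → φ u ≠ φ v) →
    ∀ u ∈ boundary G R, ∀ v ∈ boundary G R, φ u = φ v

/-- The critical complement of a set `R`: identify the boundary of `R` to a single
vertex (the vertex `none`) and delete the rest of `R`. -/
def criticalComplement {V : Type} (G : SimpleGraph V) (R : Set V) :
    SimpleGraph (Option {v : V // v ∉ R}) :=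
  SimpleGraph.fromRel (fun a b =>
    match a, b with
    | some u, some v => G.Adj u.1 v.1
    | some u, none => ∃ w ∈ boundary G R, G.Adj u.1 w
    | none, some _ => False
    | none, none => False)

/-- A nonempty proper subset `R` with boundary `S` is cocollapsible if every vertex
of `S` has exactly one neighbor outside `R`, and for every non-constant list of
forbidden colors on `S` there is a proper 3-coloring of `G[R]` avoiding them. -/
def Cocollapsible {V : Type} (G : SimpleGraph V) (R : Set V) : Prop :=
  R.Nonempty ∧ R ≠ Set.univ ∧
  (∀ v ∈ boundary G R, ∃! u, u ∉ R ∧ G.Adj v u) ∧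
  ∀ f : V → Fin 3,
    (∃ u ∈ boundary G R, ∃ v ∈ boundary G R, f u ≠ f v) →
    ∃ φ : V → Fin 3, (∀ u ∈ R, ∀ v ∈ R, G.Adj u v → φ u ≠ φ v) ∧
      ∀ v ∈ boundary G R, φ v ≠ f v

/-- A cocollapsible set is nontrivial if its complement has more than one vertex. -/
def NontrivialCocollapsible {V : Type} (G : SimpleGraph V) (R : Set V) : Prop :=
  Cocollapsible G R ∧ 1 < (Rᶜ : Set V).ncard

/-- The graph `H` together with the (possibly new) edge `uv`. -/
def withEdge {W : Type} (H : SimpleGraph W) (u v : W) : SimpleGraph W :=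
  H ⊔ SimpleGraph.fromEdgeSet {s(u, v)}

/-- A collapsible set `R` is tight if for any two distinct boundary vertices `u, v`
the graph `G[R] + uv` is `4`-critical. -/
def TightCollapsible {V : Type} (G : SimpleGraph V) (R : Set V) : Prop :=
  Collapsible G R ∧
  ∀ u (hu : u ∈ boundary G R) v (hv : v ∈ boundary G R), u ≠ v →
    IsKCritical (withEdge (G.induce R) ⟨u, hu.1⟩ ⟨v, hv.1⟩) 4

/-- `s(H) = |E(H)| - |V(H)| + α(H)`. -/
noncomputable def sVal {V : Type} (H : SimpleGraph V) : ℤ :=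
  (numEdges H : ℤ) - (Nat.card V : ℤ) + (_root_.indepNum H : ℤ)

/-- `H7`: the unique Ore-composition of two copies of `K4`. Vertices `0,1,2,3`
form the edge-side `K4` with replaced edge `01`; the split vertex of the second
`K4` on `{z,4,5,6}` is split so that `0` gets the edge to `4` and `1` gets the
edges to `5` and `6`. -/
def H7 : SimpleGraph (Fin 7) :=
  SimpleGraph.fromRel (fun a b =>
    ((a, b) : Fin 7 × Fin 7) ∈
      ([(0, 2), (0, 3), (1, 2), (1, 3), (2, 3), (4, 5), (4, 6), (5, 6),
        (0, 4), (1, 5), (1, 6)] : List (Fin 7 × Fin 7)))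

/-- A diamond in `G`: a subgraph isomorphic to `K4` minus an edge whose two
vertices of degree three within the subgraph (`w1` and `w2`) also have degree
three in `G`.  The vertices `e1` and `e2` are the ends of the diamond. -/
def IsDiamond {V : Type} (G : SimpleGraph V) (e1 e2 w1 w2 : V) : Prop :=
  e1 ≠ e2 ∧ e1 ≠ w1 ∧ e1 ≠ w2 ∧ e2 ≠ w1 ∧ e2 ≠ w2 ∧ w1 ≠ w2 ∧
  G.Adj w1 w2 ∧ G.Adj e1 w1 ∧ G.Adj e1 w2 ∧ G.Adj e2 w1 ∧ G.Adj e2 w2 ∧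
  deg G w1 = 3 ∧ deg G w2 = 3

/-- A triangle with a pendant edge. -/
def trianglePendant1 : SimpleGraph (Fin 4) :=
  SimpleGraph.fromRel (fun a b =>
    ((a, b) : Fin 4 × Fin 4) ∈ ([(0, 1), (1, 2), (2, 0), (0, 3)] : List (Fin 4 × Fin 4)))

/-- A triangle with a pendant path on two further vertices. -/
def trianglePendant2 : SimpleGraph (Fin 5) :=
  SimpleGraph.fromRel (fun a b =>
    ((a, b) : Fin 5 × Fin 5) ∈
      ([(0, 1), (1, 2), (2, 0), (0, 3), (3, 4)] : List (Fin 5 × Fin 5)))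
open Sum

section Aux
variable {V : Type}

lemma deg_eq_degree [Fintype V] (G : SimpleGraph V) [DecidableRel G.Adj] (v : V) :
    deg G v = G.degree v := by
  rw [deg, ← SimpleGraph.card_neighborSet_eq_degree]
  exact Nat.card_eq_fintype_card

lemma numEdges_eq [Fintype V] (G : SimpleGraph V) [DecidableRel G.Adj] :
    numEdges G = G.edgeFinset.card := by
  rw [numEdges, Nat.card_eq_fintype_card, SimpleGraph.edgeFinset_card]

lemma handshake [Fintype V] (G : SimpleGraph V) : ∑ v, deg G v = 2 * numEdges G := by
  classical
  simp_rw [deg_eq_degree, numEdges_eq]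
  exact G.sum_degrees_eq_twice_card_edges

lemma le_indepNum [Finite V] (G : SimpleGraph V) (s : Set V)
    (hs : ∀ u ∈ s, ∀ v ∈ s, ¬ G.Adj u v) : s.ncard ≤ _root_.indepNum G := by
  apply le_csSup
  · refine ⟨Nat.card V, ?_⟩
    rintro n ⟨t, -, rfl⟩
    rw [← Set.ncard_univ]
    exact Set.ncard_le_ncard (Set.subset_univ t) Set.finite_univ
  · exact ⟨s, hs, rfl⟩

lemma exists_indep [Finite V] (G : SimpleGraph V) :
    ∃ s : Set V, (∀ u ∈ s, ∀ v ∈ s, ¬ G.Adj u v) ∧ s.ncard = _root_.indepNum G := by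
  have hne : ({n | ∃ s : Set V, (∀ u ∈ s, ∀ v ∈ s, ¬ G.Adj u v) ∧ s.ncard = n}).Nonempty :=
    ⟨0, ∅, by simp, by simp⟩
  have hbd : BddAbove {n | ∃ s : Set V, (∀ u ∈ s, ∀ v ∈ s, ¬ G.Adj u v) ∧ s.ncard = n} := by
    refine ⟨Nat.card V, ?_⟩
    rintro n ⟨t, -, rfl⟩
    rw [← Set.ncard_univ]
    exact Set.ncard_le_ncard (Set.subset_univ t) Set.finite_univ
  exact Nat.sSup_mem hne hbd

def GoodP {V : Type} (G : SimpleGraph V) : Prop :=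
  4 ≤ Nat.card V ∧ (∀ v, 3 ≤ deg G v) ∧ 3 * numEdges G + 2 = 5 * Nat.card V ∧
  ∀ S : Set V, (∀ v ∈ S, deg G v ≤ 3) → (∀ u ∈ S, ∀ v ∈ S, ¬ G.Adj u v) →
    3 * S.ncard + 1 ≤ Nat.card V

lemma goodP_of_iso {V W : Type} {G : SimpleGraph V} {G' : SimpleGraph W}
    (e : G ≃g G') (h : GoodP G) : GoodP G' := by
  obtain ⟨h4, hdeg, hedge, hind⟩ := h
  have hcard : Nat.card V = Nat.card W := Nat.card_congr e.toEquiv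
  have hdegeq : ∀ w : W, deg G' w = deg G (e.symm w) := by
    intro w
    have h := Nat.card_congr (e.mapNeighborSet (e.symm w))
    simp only [e.apply_symm_apply] at h
    rw [deg, deg]
    exact h.symm
  refine ⟨hcard ▸ h4, fun w => (hdegeq w) ▸ hdeg _, ?_, ?_⟩
  · rw [numEdges, ← Nat.card_congr e.mapEdgeSet, ← numEdges, hedge, hcard]
  · intro S hS3 hSind
    have key := hind (⇑e ⁻¹' S) (fun v hv => by
        have : deg G v = deg G' (e v) := by rw [hdegeq (e v), e.symm_apply_apply]
        rw [this]; exact hS3 _ hv)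
      (fun u hu v hv hadj => hSind _ hu _ hv (e.map_adj_iff.mpr hadj))
    have him : S = ⇑e '' (⇑e ⁻¹' S) := by
      rw [Set.image_preimage_eq]
      exact e.toEquiv.surjective
    rw [him, Set.ncard_image_of_injective _ (EquivLike.injective e), ← hcard]
    exact key

instance : DecidableRel (completeGraph (Fin 4)).Adj := fun a b => by
  simp only [completeGraph, SimpleGraph.top_adj]; infer_instance

lemma goodP_K4 : GoodP (completeGraph (Fin 4)) := by
  refine ⟨by simp [Nat.card_eq_fintype_card], fun v => ?_, ?_, ?_⟩
  · rw [deg_eq_degree]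
    revert v; decide
  · rw [numEdges_eq]
    norm_num [Nat.card_eq_fintype_card]
    decide
  · intro S hS3 hSind
    have : S.Subsingleton := by
      intro u hu v hv
      by_contra hne
      exact hSind u hu v hv hne
    have h1 : S.ncard ≤ 1 := (Set.ncard_le_one (Set.toFinite S)).mpr (fun a ha b hb => this ha hb)
    simp only [Nat.card_eq_fintype_card, Fintype.card_fin]
    omega
end Aux

section Comp
variable {V1 V2 : Type} {G1 : SimpleGraph V1} {G2 : SimpleGraph V2}
  {x y : V1} {z : V2} {A : Set V2}

lemma oc_adj_inl_inl {u v : V1} :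
    (oreCompose G1 G2 x y z A).Adj (inl u) (inl v) ↔
      G1.Adj u v ∧ ¬((u = x ∧ v = y) ∨ (u = y ∧ v = x)) := by
  rw [oreCompose, fromRel_adj]
  constructor
  · rintro ⟨-, h | h⟩
    · exact h
    · exact ⟨h.1.symm, fun hc => h.2 (by tauto)⟩
  · intro h
    exact ⟨fun hc => h.1.ne (Sum.inl_injective hc), Or.inl h⟩

lemma oc_adj_inl_inr {u : V1} {v : {v : V2 // v ≠ z}} :
    (oreCompose G1 G2 x y z A).Adj (inl u) (inr v) ↔
      (u = x ∧ G2.Adj z v.1 ∧ v.1 ∈ A) ∨ (u = y ∧ G2.Adj z v.1 ∧ v.1 ∉ A) := by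
  rw [oreCompose, fromRel_adj]
  simp

lemma oc_adj_inr_inr {u v : {v : V2 // v ≠ z}} :
    (oreCompose G1 G2 x y z A).Adj (inr u) (inr v) ↔ G2.Adj u.1 v.1 := by
  rw [oreCompose, fromRel_adj]
  constructor
  · rintro ⟨-, h | h⟩
    · exact h
    · exact h.symm
  · intro h
    exact ⟨fun hc => h.ne (congrArg Subtype.val (Sum.inr_injective hc)), Or.inl h⟩

lemma oc_nbhd_inl {v : V1} (hvx : v ≠ x) (hvy : v ≠ y) :
    (oreCompose G1 G2 x y z A).neighborSet (inl v) = inl '' G1.neighborSet v := by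
  ext w
  cases w with
  | inl u => simp [mem_neighborSet, oc_adj_inl_inl, hvx, hvy]
  | inr u => simp [mem_neighborSet, oc_adj_inl_inr, hvx, hvy]

lemma oc_nbhd_inl_x (hxy : x ≠ y) :
    (oreCompose G1 G2 x y z A).neighborSet (inl x) =
      inl '' (G1.neighborSet x \ {y}) ∪
      inr '' {w : {v : V2 // v ≠ z} | G2.Adj z w.1 ∧ w.1 ∈ A} := by
  ext w
  cases w with
  | inl u =>
      simp only [mem_neighborSet, oc_adj_inl_inl, Set.mem_union, Set.mem_image,
        Set.mem_diff, Set.mem_singleton_iff, Set.mem_setOf_eq]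
      constructor
      · rintro ⟨h, hne⟩
        refine Or.inl ⟨u, ⟨h, fun hu => hne ?_⟩, rfl⟩
        tauto
      · rintro (⟨a, ⟨ha, hay⟩, hc⟩ | ⟨a, -, hc⟩)
        · cases Sum.inl_injective hc
          exact ⟨ha, by tauto⟩
        · exact absurd hc (by simp)
  | inr u =>
      simp only [mem_neighborSet, oc_adj_inl_inr, Set.mem_union, Set.mem_image,
        Set.mem_setOf_eq]
      constructor
      · rintro (⟨-, h⟩ | ⟨hc, -⟩)
        · exact Or.inr ⟨u, h, rfl⟩
        · exact absurd hc hxy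
      · rintro (⟨a, -, hc⟩ | ⟨a, ha, hc⟩)
        · exact absurd hc (by simp)
        · cases Sum.inr_injective hc
          tauto

lemma oc_nbhd_inl_y (hxy : x ≠ y) :
    (oreCompose G1 G2 x y z A).neighborSet (inl y) =
      inl '' (G1.neighborSet y \ {x}) ∪
      inr '' {w : {v : V2 // v ≠ z} | G2.Adj z w.1 ∧ w.1 ∉ A} := by
  ext w
  cases w with
  | inl u =>
      simp only [mem_neighborSet, oc_adj_inl_inl, Set.mem_union, Set.mem_image,
        Set.mem_diff, Set.mem_singleton_iff, Set.mem_setOf_eq]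
      constructor
      · rintro ⟨h, hne⟩
        refine Or.inl ⟨u, ⟨h, fun hu => hne ?_⟩, rfl⟩
        tauto
      · rintro (⟨a, ⟨ha, hax⟩, hc⟩ | ⟨a, -, hc⟩)
        · cases Sum.inl_injective hc
          exact ⟨ha, by tauto⟩
        · exact absurd hc (by simp)
  | inr u =>
      simp only [mem_neighborSet, oc_adj_inl_inr, Set.mem_union, Set.mem_image,
        Set.mem_setOf_eq]
      constructor
      · rintro (⟨hc, -⟩ | ⟨-, h⟩)
        · exact absurd hc hxy.symm
        · exact Or.inr ⟨u, h, rfl⟩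
      · rintro (⟨a, -, hc⟩ | ⟨a, ha, hc⟩)
        · exact absurd hc (by simp)
        · cases Sum.inr_injective hc
          tauto

lemma oc_disj_lr {S : Set V1} {T : Set {v : V2 // v ≠ z}} :
    Disjoint (inl '' S : Set (V1 ⊕ {v : V2 // v ≠ z})) (inr '' T) := by
  rw [Set.disjoint_left]
  rintro _ ⟨a, -, rfl⟩ ⟨b, -, hc⟩
  exact Sum.inl_ne_inr hc.symm

variable [Finite V1] [Finite V2]

omit [Finite V1] [Finite V2] in
lemma oc_deg_inl {v : V1} (hvx : v ≠ x) (hvy : v ≠ y) :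
    deg (oreCompose G1 G2 x y z A) (inl v) = deg G1 v := by
  rw [deg, oc_nbhd_inl hvx hvy, Nat.card_coe_set_eq,
    Set.ncard_image_of_injective _ Sum.inl_injective, deg, Nat.card_coe_set_eq]

lemma oc_deg_inl_x (hxy : G1.Adj x y) :
    deg (oreCompose G1 G2 x y z A) (inl x) + 1 =
      deg G1 x + ({w : {v : V2 // v ≠ z} | G2.Adj z w.1 ∧ w.1 ∈ A}).ncard := by
  rw [deg, oc_nbhd_inl_x hxy.ne, Nat.card_coe_set_eq,
    Set.ncard_union_eq oc_disj_lr (Set.toFinite _) (Set.toFinite _),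
    Set.ncard_image_of_injective _ Sum.inl_injective,
    Set.ncard_image_of_injective _ Sum.inr_injective]
  have h1 : (G1.neighborSet x \ {y}).ncard + 1 = (G1.neighborSet x).ncard :=
    Set.ncard_diff_singleton_add_one hxy (Set.toFinite _)
  rw [deg, Nat.card_coe_set_eq]
  omega

lemma oc_deg_inl_y (hxy : G1.Adj x y) :
    deg (oreCompose G1 G2 x y z A) (inl y) + 1 =
      deg G1 y + ({w : {v : V2 // v ≠ z} | G2.Adj z w.1 ∧ w.1 ∉ A}).ncard := by
  rw [deg, oc_nbhd_inl_y hxy.ne, Nat.card_coe_set_eq,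
    Set.ncard_union_eq oc_disj_lr (Set.toFinite _) (Set.toFinite _),
    Set.ncard_image_of_injective _ Sum.inl_injective,
    Set.ncard_image_of_injective _ Sum.inr_injective]
  have h1 : (G1.neighborSet y \ {x}).ncard + 1 = (G1.neighborSet y).ncard :=
    Set.ncard_diff_singleton_add_one hxy.symm (Set.toFinite _)
  rw [deg, Nat.card_coe_set_eq]
  omega

omit [Finite V1] [Finite V2] in
open Classical in
lemma oc_nbhd_inr {v : {v : V2 // v ≠ z}} :
    (oreCompose G1 G2 x y z A).neighborSet (inr v) =
      (fun w => if h : w = z then (if v.1 ∈ A then (inl x : V1 ⊕ {v : V2 // v ≠ z}) else inl y)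
        else inr ⟨w, h⟩) '' G2.neighborSet v.1 := by
  ext w
  simp only [mem_neighborSet, Set.mem_image]
  cases w with
  | inl u =>
      constructor
      · intro h
        rw [adj_comm, oc_adj_inl_inr] at h
        refine ⟨z, h.elim (fun h => h.2.1.symm) (fun h => h.2.1.symm), ?_⟩
        rcases h with ⟨rfl, -, hA⟩ | ⟨rfl, -, hA⟩
        · simp [hA]
        · simp [hA]
      · rintro ⟨w, hw, hc⟩
        by_cases hwz : w = z
        · subst hwz
          rw [adj_comm, oc_adj_inl_inr]
          rw [dif_pos rfl] at hc
          by_cases hA : v.1 ∈ A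
          · rw [if_pos hA] at hc
            cases Sum.inl_injective hc.symm
            exact Or.inl ⟨rfl, hw.symm, hA⟩
          · rw [if_neg hA] at hc
            cases Sum.inl_injective hc.symm
            exact Or.inr ⟨rfl, hw.symm, hA⟩
        · rw [dif_neg hwz] at hc
          exact absurd hc (by simp)
  | inr u =>
      constructor
      · intro h
        rw [oc_adj_inr_inr] at h
        exact ⟨u.1, h, by simp [u.2]⟩
      · rintro ⟨w, hw, hc⟩
        by_cases hwz : w = z
        · subst hwz
          rw [dif_pos rfl] at hc
          by_cases hA : v.1 ∈ A <;> simp [hA] at hc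
        · rw [dif_neg hwz] at hc
          cases Sum.inr_injective hc
          exact oc_adj_inr_inr.mpr hw

omit [Finite V1] [Finite V2] in
lemma oc_deg_inr {v : {v : V2 // v ≠ z}} :
    deg (oreCompose G1 G2 x y z A) (inr v) = deg G2 v.1 := by
  classical
  rw [deg, oc_nbhd_inr, Nat.card_coe_set_eq, deg, Nat.card_coe_set_eq]
  apply Set.ncard_image_of_injective
  intro w1 w2 h
  dsimp only at h
  by_cases h1 : w1 = z <;> by_cases h2 : w2 = z
  · rw [h1, h2]
  · rw [dif_pos h1, dif_neg h2] at h
    by_cases hA : v.1 ∈ A <;> simp [hA] at h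
  · rw [dif_neg h1, dif_pos h2] at h
    by_cases hA : v.1 ∈ A <;> simp [hA] at h
  · rw [dif_neg h1, dif_neg h2] at h
    exact congrArg Subtype.val (Sum.inr_injective h)

lemma oc_ab :
    ({w : {v : V2 // v ≠ z} | G2.Adj z w.1 ∧ w.1 ∈ A}).ncard +
      ({w : {v : V2 // v ≠ z} | G2.Adj z w.1 ∧ w.1 ∉ A}).ncard = deg G2 z := by
  have hA : Subtype.val '' {w : {v : V2 // v ≠ z} | G2.Adj z w.1 ∧ w.1 ∈ A}
      = G2.neighborSet z ∩ A := by
    ext w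
    simp only [Set.mem_image, Set.mem_setOf_eq, Set.mem_inter_iff, mem_neighborSet]
    constructor
    · rintro ⟨a, ⟨h1, h2⟩, rfl⟩; exact ⟨h1, h2⟩
    · rintro ⟨h1, h2⟩; exact ⟨⟨w, h1.ne'⟩, ⟨h1, h2⟩, rfl⟩
  have hB : Subtype.val '' {w : {v : V2 // v ≠ z} | G2.Adj z w.1 ∧ w.1 ∉ A}
      = G2.neighborSet z ∩ Aᶜ := by
    ext w
    simp only [Set.mem_image, Set.mem_setOf_eq, Set.mem_inter_iff, mem_neighborSet,
      Set.mem_compl_iff]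
    constructor
    · rintro ⟨a, ⟨h1, h2⟩, rfl⟩; exact ⟨h1, h2⟩
    · rintro ⟨h1, h2⟩; exact ⟨⟨w, h1.ne'⟩, ⟨h1, h2⟩, rfl⟩
  have hU : (G2.neighborSet z ∩ A) ∪ (G2.neighborSet z ∩ Aᶜ) = G2.neighborSet z := by
    rw [← Set.inter_union_distrib_left]
    simp
  have hD : Disjoint (G2.neighborSet z ∩ A) (G2.neighborSet z ∩ Aᶜ) := by
    rw [Set.disjoint_left]
    rintro w ⟨-, h1⟩ ⟨-, h2⟩
    exact h2 h1
  have e1 : ({w : {v : V2 // v ≠ z} | G2.Adj z w.1 ∧ w.1 ∈ A}).ncard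
      = (G2.neighborSet z ∩ A).ncard := by
    rw [← hA, Set.ncard_image_of_injective _ Subtype.val_injective]
  have e2 : ({w : {v : V2 // v ≠ z} | G2.Adj z w.1 ∧ w.1 ∉ A}).ncard
      = (G2.neighborSet z ∩ Aᶜ).ncard := by
    rw [← hB, Set.ncard_image_of_injective _ Subtype.val_injective]
  rw [e1, e2, ← Set.ncard_union_eq hD (Set.toFinite _) (Set.toFinite _), hU, deg,
    Nat.card_coe_set_eq]

lemma oc_numEdges (hxy : G1.Adj x y) :
    numEdges (oreCompose G1 G2 x y z A) + 1 = numEdges G1 + numEdges G2 := by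
  classical
  cases nonempty_fintype V1
  cases nonempty_fintype V2
  have hH := handshake (oreCompose G1 G2 x y z A)
  have h1 := handshake G1
  have h2 := handshake G2
  rw [Fintype.sum_sum_type] at hH
  have e1 : (∑ v : V1, deg (oreCompose G1 G2 x y z A) (inl v)) + 2
      = ((∑ v : V1, deg G1 v) + ({w : {v : V2 // v ≠ z} | G2.Adj z w.1 ∧ w.1 ∈ A}).ncard)
        + ({w : {v : V2 // v ≠ z} | G2.Adj z w.1 ∧ w.1 ∉ A}).ncard := by
    have hyx : y ∈ Finset.univ.erase x := Finset.mem_erase.mpr ⟨hxy.ne', Finset.mem_univ y⟩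
    rw [← Finset.sum_erase_add _ _ (Finset.mem_univ x), ← Finset.sum_erase_add _ _ hyx,
      ← Finset.sum_erase_add _ (deg G1) (Finset.mem_univ x),
      ← Finset.sum_erase_add _ (deg G1) hyx]
    have hsum : ∑ v ∈ (Finset.univ.erase x).erase y, deg (oreCompose G1 G2 x y z A) (inl v)
        = ∑ v ∈ (Finset.univ.erase x).erase y, deg G1 v := by
      apply Finset.sum_congr rfl
      intro v hv
      rw [Finset.mem_erase, Finset.mem_erase] at hv
      exact oc_deg_inl hv.2.1 hv.1
    have hx := oc_deg_inl_x (G1 := G1) (G2 := G2) (A := A) (z := z) hxy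
    have hy := oc_deg_inl_y (G1 := G1) (G2 := G2) (A := A) (z := z) hxy
    omega
  have e2 : (∑ v : {v : V2 // v ≠ z}, deg (oreCompose G1 G2 x y z A) (inr v)) + deg G2 z
      = ∑ v : V2, deg G2 v := by
    have h3 : ∀ v : {v : V2 // v ≠ z}, deg (oreCompose G1 G2 x y z A) (inr v) = deg G2 v.1 :=
      fun v => oc_deg_inr
    rw [Finset.sum_congr rfl (fun v _ => h3 v),
      ← Finset.sum_subtype (Finset.univ.erase z) (fun v => by simp) (fun v => deg G2 v),
      Finset.sum_erase_add _ _ (Finset.mem_univ z)]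
  have hab := oc_ab (G2 := G2) (z := z) (A := A)
  omega

lemma oc_card :
    Nat.card (V1 ⊕ {v : V2 // v ≠ z}) + 1 = Nat.card V1 + Nat.card V2 := by
  rw [Nat.card_sum]
  have h1 : Nat.card {v : V2 // v ≠ z} = ({z}ᶜ : Set V2).ncard := by
    rw [← Nat.card_coe_set_eq]
    exact Nat.card_congr (Equiv.subtypeEquivRight (by simp))
  have h2 := Set.ncard_add_ncard_compl ({z} : Set V2)
  rw [Set.ncard_singleton] at h2
  omega

lemma goodP_comp (hxy : G1.Adj x y) (hp : ∃ p, G2.Adj z p ∧ p ∈ A)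
    (hq : ∃ q, G2.Adj z q ∧ q ∉ A) (h1 : GoodP G1) (h2 : GoodP G2) :
    GoodP (oreCompose G1 G2 x y z A) := by
  obtain ⟨h14, h1deg, h1edge, h1ind⟩ := h1
  obtain ⟨h24, h2deg, h2edge, h2ind⟩ := h2
  obtain ⟨p, hzp, hpA⟩ := hp
  obtain ⟨q, hzq, hqA⟩ := hq
  have hW := oc_card (V1 := V1) (V2 := V2) (z := z)
  have ha1 : 1 ≤ ({w : {v : V2 // v ≠ z} | G2.Adj z w.1 ∧ w.1 ∈ A}).ncard :=
    (Set.ncard_pos (Set.toFinite _)).mpr ⟨⟨p, hzp.ne'⟩, hzp, hpA⟩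
  have hb1 : 1 ≤ ({w : {v : V2 // v ≠ z} | G2.Adj z w.1 ∧ w.1 ∉ A}).ncard :=
    (Set.ncard_pos (Set.toFinite _)).mpr ⟨⟨q, hzq.ne'⟩, hzq, hqA⟩
  have hax := oc_deg_inl_x (G1 := G1) (G2 := G2) (A := A) (z := z) hxy
  have hay := oc_deg_inl_y (G1 := G1) (G2 := G2) (A := A) (z := z) hxy
  have hab := oc_ab (G2 := G2) (z := z) (A := A)
  refine ⟨by omega, ?_, ?_, ?_⟩
  · intro w
    cases w with
    | inl v =>
        by_cases hvx : v = x
        · subst hvx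
          have := h1deg v
          omega
        · by_cases hvy : v = y
          · subst hvy
            have := h1deg v
            omega
          · rw [oc_deg_inl hvx hvy]
            exact h1deg v
    | inr v =>
        rw [oc_deg_inr]
        exact h2deg v.1
  · have he := oc_numEdges (G2 := G2) (z := z) (A := A) hxy
    omega
  · intro S hS3 hSind
    set S1 : Set V1 := inl ⁻¹' S with hS1
    set S2 : Set {v : V2 // v ≠ z} := inr ⁻¹' S with hS2
    have hScard : S.ncard = S1.ncard + S2.ncard := by
      have hrw : S = inl '' S1 ∪ inr '' S2 := by
        ext w
        cases w <;> simp [hS1, hS2]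
      rw [hrw, Set.ncard_union_eq oc_disj_lr (Set.toFinite _) (Set.toFinite _),
        Set.ncard_image_of_injective _ Sum.inl_injective,
        Set.ncard_image_of_injective _ Sum.inr_injective]
    set T2 : Set V2 := Subtype.val '' S2 with hT2
    have hT2card : T2.ncard = S2.ncard := Set.ncard_image_of_injective _ Subtype.val_injective
    have hzT2 : z ∉ T2 := by
      rintro ⟨w, -, hc⟩
      exact w.2 hc
    have hT2deg : ∀ v ∈ T2, deg G2 v ≤ 3 := by
      rintro v ⟨w, hw, rfl⟩
      have := hS3 (inr w) hw
      rwa [oc_deg_inr] at this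
    have hT2ind : ∀ u ∈ T2, ∀ v ∈ T2, ¬ G2.Adj u v := by
      rintro u ⟨wu, hwu, rfl⟩ v ⟨wv, hwv, rfl⟩ hadj
      exact hSind _ hwu _ hwv (oc_adj_inr_inr.mpr hadj)
    by_cases hcase : inl x ∈ S ∧ inl y ∈ S
    · have hdx := hS3 _ hcase.1
      have hdy := hS3 _ hcase.2
      have hd1x := h1deg x
      have hd1y := h1deg y
      have hyS1 : y ∈ S1 := hcase.2
      have key1 := h1ind (S1 \ {y}) ?_ ?_
      · have key2 := h2ind (insert z T2) ?_ ?_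
        · have hc1 : (S1 \ {y}).ncard + 1 = S1.ncard :=
            Set.ncard_diff_singleton_add_one hyS1 (Set.toFinite _)
          have hc2 : (insert z T2).ncard = T2.ncard + 1 :=
            Set.ncard_insert_of_notMem hzT2 (Set.toFinite _)
          omega
        · intro v hv
          rcases Set.mem_insert_iff.mp hv with rfl | hv
          · omega
          · exact hT2deg v hv
        · intro u hu v hv hadj
          rcases Set.mem_insert_iff.mp hu with rfl | hu
          · rcases Set.mem_insert_iff.mp hv with rfl | hv
            · exact hadj.ne rfl
            · obtain ⟨wv, hwv, rfl⟩ := hv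
              by_cases hA : wv.1 ∈ A
              · exact hSind _ hcase.1 _ hwv (oc_adj_inl_inr.mpr (Or.inl ⟨rfl, hadj, hA⟩))
              · exact hSind _ hcase.2 _ hwv (oc_adj_inl_inr.mpr (Or.inr ⟨rfl, hadj, hA⟩))
          · rcases Set.mem_insert_iff.mp hv with rfl | hv
            · obtain ⟨wu, hwu, rfl⟩ := hu
              by_cases hA : wu.1 ∈ A
              · exact hSind _ hcase.1 _ hwu (oc_adj_inl_inr.mpr (Or.inl ⟨rfl, hadj.symm, hA⟩))
              · exact hSind _ hcase.2 _ hwu (oc_adj_inl_inr.mpr (Or.inr ⟨rfl, hadj.symm, hA⟩))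
            · exact hT2ind u hu v hv hadj
      · rintro v ⟨hvS1, hvy⟩
        rw [Set.mem_singleton_iff] at hvy
        by_cases hvx : v = x
        · subst hvx
          omega
        · rw [← oc_deg_inl (G2 := G2) (A := A) (z := z) hvx hvy]
          exact hS3 _ hvS1
      · rintro u ⟨hu, huy⟩ v ⟨hv, hvy⟩ hadj
        rw [Set.mem_singleton_iff] at huy hvy
        apply hSind (inl u) hu (inl v) hv
        rw [oc_adj_inl_inl]
        refine ⟨hadj, ?_⟩
        rintro (⟨rfl, rfl⟩ | ⟨rfl, rfl⟩)
        · exact hvy rfl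
        · exact huy rfl
    · have key1 := h1ind S1 ?_ ?_
      · have key2 := h2ind T2 hT2deg hT2ind
        omega
      · intro v hv
        by_cases hvx : v = x
        · subst hvx
          have := hS3 (inl v) hv
          have := h1deg v
          omega
        · by_cases hvy : v = y
          · subst hvy
            have := hS3 (inl v) hv
            have := h1deg v
            omega
          · rw [← oc_deg_inl (G2 := G2) (A := A) (z := z) hvx hvy]
            exact hS3 _ hv
      · intro u hu v hv hadj
        apply hSind (inl u) hu (inl v) hv
        rw [oc_adj_inl_inl]
        refine ⟨hadj, ?_⟩
        rintro (⟨rfl, rfl⟩ | ⟨rfl, rfl⟩)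
        · exact hcase ⟨hu, hv⟩
        · exact hcase ⟨hv, hu⟩

end Comp

lemma goodP_of_fourOre : ∀ {V : Type} (G : SimpleGraph V), IsFourOre G → Finite V → GoodP G := by
  intro V G h
  induction h with
  | k4 G hiso => exact fun _ => goodP_of_iso hiso.some.symm goodP_K4
  | @comp V V1 V2 G G1 G2 h1 h2 hcomp ih1 ih2 =>
    intro hfin
    obtain ⟨x, y, z, A, hxy, hp, hq, ⟨e⟩⟩ := hcomp
    haveI hWfin : Finite (V1 ⊕ {v : V2 // v ≠ z}) := Finite.of_equiv _ e.toEquiv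
    haveI : Finite V1 := Finite.of_injective (Sum.inl : V1 → V1 ⊕ {v : V2 // v ≠ z})
      Sum.inl_injective
    haveI : Finite {v : V2 // v ≠ z} :=
      Finite.of_injective (Sum.inr : {v : V2 // v ≠ z} → V1 ⊕ {v : V2 // v ≠ z})
        Sum.inr_injective
    haveI : Finite (Option {v : V2 // v ≠ z}) :=
      Finite.of_equiv ({v : V2 // v ≠ z} ⊕ PUnit.{1})
        (Equiv.optionEquivSumPUnit.{0,0} _).symm
    haveI : Finite V2 := by
      classical
      refine Finite.of_injective
        (fun v : V2 => if h : v = z then (none : Option {v : V2 // v ≠ z}) else some ⟨v, h⟩) ?_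
      intro a b hab
      by_cases ha : a = z <;> by_cases hb : b = z <;> simp [ha, hb] at hab <;>
        first
          | rw [ha, hb]
          | exact hab
    exact goodP_of_iso e.symm (goodP_comp hxy hp hq (ih1 inferInstance) (ih2 inferInstance))


/-- If `G` is a `4`-Ore graph, then `p(G) ≤ 1.8`. -/
theorem statement_9 {V : Type} [Fintype V] (G : SimpleGraph V)
    (h : IsFourOre G) :
    potential G ≤ 9/5 := by
  obtain ⟨h4, hdeg, hedge, hind⟩ := goodP_of_fourOre G h (Finite.of_fintype V)
  obtain ⟨s, hs, hcard⟩ := exists_indep (D3 G)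
  have hS : 3 * _root_.indepNum (D3 G) + 1 ≤ Nat.card V := by
    have h3 : ∀ v ∈ Subtype.val '' s, deg G v ≤ 3 := by
      rintro v ⟨w, -, rfl⟩
      exact w.2
    have hi : ∀ u ∈ Subtype.val '' s, ∀ v ∈ Subtype.val '' s, ¬ G.Adj u v := by
      rintro u ⟨wu, hwu, rfl⟩ v ⟨wv, hwv, rfl⟩ hadj
      exact hs wu hwu wv hwv hadj
    have hkey := hind _ h3 hi
    rwa [Set.ncard_image_of_injective _ Subtype.val_injective, hcard] at hkey
  rw [potential]
  have hE : (3 : ℚ) * (numEdges G : ℚ) + 2 = 5 * (Nat.card V : ℚ) := by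
    exact_mod_cast congrArg (Nat.cast (R := ℚ)) hedge
  have hI : (3 : ℚ) * (_root_.indepNum (D3 G) : ℚ) + 1 ≤ (Nat.card V : ℚ) := by
    exact_mod_cast hS
  linarith
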